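/- Let L ⊆ ℤ^n be a tiling of ℤ^n by translates of a finite set V ⊆ ℤ^n, and let a be an integer relatively prime to |V|. Then for every l ∈ L and every pair of distinct elements v, w ∈ V, the point l + a·(v − w) does not belong to L. -/

import Mathlib

/-- A set `L ⊆ ℤ^n` tiles `ℤ^n` by translates of `V` if every `x ∈ ℤ^n` has a unique
representation `x = v + l` with `v ∈ V` and `l ∈ L`. -/
def IsTiling {n : ℕ} (V L : Set (Fin n → ℤ)) : Prop :=
  ∀ x : Fin n → ℤ, ∃! p : (Fin n → ℤ) × (Fin n → ℤ),
    p.1 ∈ V ∧ p.2 ∈ L ∧ x = p.1 + p.2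

namespace CoprimeShift

open scoped Classical

variable {n : ℕ}

lemma exists_tile {V : Finset (Fin n → ℤ)} {L : Set (Fin n → ℤ)}
    (hL : IsTiling (V : Set (Fin n → ℤ)) L) (y : Fin n → ℤ) :
    ∃ v ∈ V, y - v ∈ L := by
  obtain ⟨P, ⟨h1, h2, h3⟩, -⟩ := hL y
  refine ⟨P.1, h1, ?_⟩
  rw [h3, add_sub_cancel_left]
  exact h2

lemma tile_unique {V : Finset (Fin n → ℤ)} {L : Set (Fin n → ℤ)}
    (hL : IsTiling (V : Set (Fin n → ℤ)) L) {y v w : Fin n → ℤ}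
    (hv : v ∈ V) (hw : w ∈ V) (hvL : y - v ∈ L) (hwL : y - w ∈ L) : v = w := by
  obtain ⟨P, -, hP⟩ := hL y
  have h1 := hP (v, y - v) ⟨hv, hvL, (add_sub_cancel v y).symm⟩
  have h2 := hP (w, y - w) ⟨hw, hwL, (add_sub_cancel w y).symm⟩
  exact congrArg Prod.fst (h1.trans h2.symm)

lemma pack {V : Finset (Fin n → ℤ)} {L : Set (Fin n → ℤ)}
    (hL : IsTiling (V : Set (Fin n → ℤ)) L) {y v w : Fin n → ℤ}
    (hv : v ∈ V) (hw : w ∈ V) (hvL : y + v ∈ L) (hwL : y + w ∈ L) : v = w := by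
  obtain ⟨P, -, hP⟩ := hL (y + v + w)
  have h1 := hP (w, y + v) ⟨hw, hvL, (by abel : y + v + w = w + (y + v))⟩
  have h2 := hP (v, y + w) ⟨hv, hwL, (by abel : y + v + w = v + (y + w))⟩
  exact congrArg Prod.fst (h2.trans h1.symm)

section Conv

variable (p : ℕ) (L : Set (Fin n → ℤ))

/-- indicator of `L` with values in `ZMod p` -/
noncomputable def fL : (Fin n → ℤ) → ZMod p := fun y => if y ∈ L then 1 else 0

/-- convolution of a finitely supported function against the indicator of `L` -/
noncomputable def B (φ : AddMonoidAlgebra (ZMod p) (Fin n → ℤ)) (y : Fin n → ℤ) : ZMod p :=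
  Finsupp.sum φ.coeff fun z c => c * fL p L (y - z)

lemma fL_apply (y : Fin n → ℤ) : fL p L y = if y ∈ L then 1 else 0 := rfl

lemma B_zero (y : Fin n → ℤ) : B p L 0 y = 0 := Finsupp.sum_zero_index

lemma B_add (φ ψ : AddMonoidAlgebra (ZMod p) (Fin n → ℤ)) (y : Fin n → ℤ) :
    B p L (φ + ψ) y = B p L φ y + B p L ψ y :=
  Finsupp.sum_add_index' (fun z => by simp) (fun z c d => by ring)

lemma B_single (z : Fin n → ℤ) (c : ZMod p) (y : Fin n → ℤ) :
    B p L (AddMonoidAlgebra.single z c) y = c * fL p L (y - z) :=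
  Finsupp.sum_single_index (by simp)

lemma B_finset_sum {ι : Type*} (s : Finset ι)
    (g : ι → AddMonoidAlgebra (ZMod p) (Fin n → ℤ)) (y : Fin n → ℤ) :
    B p L (∑ i ∈ s, g i) y = ∑ i ∈ s, B p L (g i) y := by
  induction s using Finset.cons_induction with
  | empty => simp [B_zero]
  | cons i s hi ih => rw [Finset.sum_cons, B_add, ih, Finset.sum_cons]

lemma B_mul_single (φ : AddMonoidAlgebra (ZMod p) (Fin n → ℤ)) (v y : Fin n → ℤ) :
    B p L (φ * AddMonoidAlgebra.single v (1 : ZMod p)) y = B p L φ (y - v) := by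
  induction φ using AddMonoidAlgebra.induction with
  | zero => rw [zero_mul, B_zero, B_zero]
  | single_add a b ψ _ _ ih =>
      rw [add_mul, B_add, B_add, ih]
      congr 1
      rw [AddMonoidAlgebra.single_mul_single, B_single, B_single, mul_one]
      have : y - (a + v) = y - v - a := by abel
      rw [this]

end Conv

lemma dilation {V : Finset (Fin n → ℤ)} {L : Set (Fin n → ℤ)}
    (hL : IsTiling (V : Set (Fin n → ℤ)) L) {p : ℕ} (hp : p.Prime)
    (hpV : ¬ p ∣ V.card) :
    IsTiling ((V.image fun v => (p : ℕ) • v : Finset (Fin n → ℤ)) : Set (Fin n → ℤ)) L := by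
  haveI : Fact p.Prime := ⟨hp⟩
  haveI : CharP (AddMonoidAlgebra (ZMod p) (Fin n → ℤ)) p :=
    charP_of_injective_ringHom
      (f := (AddMonoidAlgebra.singleZeroRingHom :
        ZMod p →+* AddMonoidAlgebra (ZMod p) (Fin n → ℤ)))
      (fun a b hab => AddMonoidAlgebra.single_right_injective (m := 0) hab) p
  have cnt1 : ∀ y : Fin n → ℤ, (V.filter fun v => y - v ∈ L).card = 1 := by
    intro y
    obtain ⟨v₀, hv₀, hv₀L⟩ := exists_tile hL y
    rw [Finset.card_eq_one]
    refine ⟨v₀, ?_⟩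
    ext z
    simp only [Finset.mem_filter, Finset.mem_singleton]
    constructor
    · rintro ⟨hz, hzL⟩; exact tile_unique hL hz hv₀ hzL hv₀L
    · rintro rfl; exact ⟨hv₀, hv₀L⟩
  set u : AddMonoidAlgebra (ZMod p) (Fin n → ℤ) :=
    ∑ v ∈ V, AddMonoidAlgebra.single v (1 : ZMod p) with hu
  have hBu : ∀ y, B p L u y = 1 := by
    intro y
    have e1 : B p L u y = ∑ v ∈ V, (if y - v ∈ L then (1 : ZMod p) else 0) := by
      rw [hu, B_finset_sum]
      exact Finset.sum_congr rfl fun v _ => by rw [B_single, one_mul, fL_apply]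
    rw [e1, Finset.sum_boole, cnt1 y]
    exact Nat.cast_one
  have hBpow : ∀ (k : ℕ) (y), B p L (u ^ (k + 1)) y = (V.card : ZMod p) ^ k := by
    intro k
    induction k with
    | zero => intro y; rw [pow_one, hBu, pow_zero]
    | succ k ih =>
        intro y
        have hBmulu : B p L (u ^ (k + 1) * u) y = ∑ v ∈ V, B p L (u ^ (k + 1)) (y - v) := by
          conv_lhs => rw [hu, Finset.mul_sum]
          rw [B_finset_sum]
          exact Finset.sum_congr rfl fun v _ => B_mul_single p L (u ^ (k + 1)) v y
        rw [pow_succ, hBmulu]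
        rw [Finset.sum_congr rfl fun v _ => ih (y - v)]
        rw [Finset.sum_const, nsmul_eq_mul, pow_succ']
  have hfrob : u ^ p = ∑ v ∈ V, AddMonoidAlgebra.single ((p : ℕ) • v) (1 : ZMod p) := by
    rw [hu, sum_pow_char]
    exact Finset.sum_congr rfl fun v _ => by rw [AddMonoidAlgebra.single_pow, one_pow]
  have hq0 : (V.card : ZMod p) ≠ 0 := by
    rw [Ne, ZMod.natCast_eq_zero_iff]
    exact hpV
  have hcard : ∀ y : Fin n → ℤ,
      ((V.filter fun v => y - (p : ℕ) • v ∈ L).card : ZMod p) = 1 := by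
    intro y
    have h1 : B p L (u ^ p) y = 1 := by
      have hpp : u ^ p = u ^ ((p - 1) + 1) := by
        have h : p - 1 + 1 = p := Nat.succ_pred_eq_of_pos hp.pos
        rw [h]
      rw [hpp, hBpow (p - 1) y, ZMod.pow_card_sub_one_eq_one hq0]
    have h2 : B p L (u ^ p) y
        = ((V.filter fun v => y - (p : ℕ) • v ∈ L).card : ZMod p) := by
      rw [hfrob, B_finset_sum]
      have e2 : (∑ v ∈ V, B p L (AddMonoidAlgebra.single ((p : ℕ) • v) (1 : ZMod p)) y)
          = ∑ v ∈ V, (if y - (p : ℕ) • v ∈ L then (1 : ZMod p) else 0) :=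
        Finset.sum_congr rfl fun v _ => by rw [B_single, one_mul, fL_apply]
      rw [e2, Finset.sum_boole]
    rw [← h2, h1]
  have hcov : ∀ y : Fin n → ℤ, ∃ v ∈ V, y - (p : ℕ) • v ∈ L := by
    intro y
    by_contra hcon
    push_neg at hcon
    have hempty : (V.filter fun v => y - (p : ℕ) • v ∈ L) = ∅ := by
      rw [Finset.filter_eq_empty_iff]
      exact fun v hv => hcon v hv
    have h := hcard y
    rw [hempty] at h
    simp at h
  have hpk : ∀ y : Fin n → ℤ, (V.filter fun w => y + w ∈ L).card ≤ 1 := by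
    intro y
    refine Finset.card_le_one.mpr ?_
    intro a ha b hb
    rw [Finset.mem_filter] at ha hb
    exact pack hL ha.1 hb.1 ha.2 hb.2
  have hone : ∀ y : Fin n → ℤ, (V.filter fun v => y - (p : ℕ) • v ∈ L).card = 1 := by
    have hVne : V.Nonempty := by
      obtain ⟨v, hv, -⟩ := exists_tile hL 0; exact ⟨v, hv⟩
    intro y
    obtain ⟨u₀, hu₀⟩ := hVne
    have hkey : ∑ t ∈ V, (V.filter fun v => (y - u₀ + t) - (p : ℕ) • v ∈ L).card
        = ∑ v ∈ V, (V.filter fun w => (y - u₀ - (p : ℕ) • v) + w ∈ L).card := by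
      simp_rw [Finset.card_filter]
      rw [Finset.sum_comm]
      refine Finset.sum_congr rfl fun v _ => Finset.sum_congr rfl fun t _ => ?_
      have harr : (y - u₀ + t) - (p : ℕ) • v = (y - u₀ - (p : ℕ) • v) + t := by abel
      rw [harr]
    have hub : ∑ v ∈ V, (V.filter fun w => (y - u₀ - (p : ℕ) • v) + w ∈ L).card ≤ V.card := by
      calc ∑ v ∈ V, (V.filter fun w => (y - u₀ - (p : ℕ) • v) + w ∈ L).card
          ≤ ∑ _v ∈ V, 1 := Finset.sum_le_sum fun v _ => hpk _
        _ = V.card := by rw [Finset.sum_const, smul_eq_mul, mul_one]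
    have hlb : ∀ t ∈ V, 1 ≤ (V.filter fun v => (y - u₀ + t) - (p : ℕ) • v ∈ L).card := by
      intro t _
      obtain ⟨v, hv, hvL⟩ := hcov (y - u₀ + t)
      exact Finset.card_pos.mpr ⟨v, Finset.mem_filter.mpr ⟨hv, hvL⟩⟩
    have heach : ∀ t ∈ V, (V.filter fun v => (y - u₀ + t) - (p : ℕ) • v ∈ L).card = 1 := by
      intro t ht
      by_contra hne
      have h2 : 1 < (V.filter fun v => (y - u₀ + t) - (p : ℕ) • v ∈ L).card :=
        lt_of_le_of_ne (hlb t ht) (Ne.symm hne)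
      have hstrict : ∑ _t ∈ V, 1
          < ∑ t ∈ V, (V.filter fun v => (y - u₀ + t) - (p : ℕ) • v ∈ L).card :=
        Finset.sum_lt_sum (fun i hi => hlb i hi) ⟨t, ht, h2⟩
      rw [Finset.sum_const, smul_eq_mul, mul_one, hkey] at hstrict
      exact absurd (hstrict.trans_le hub) (lt_irrefl _)
    have h := heach u₀ hu₀
    rwa [show y - u₀ + u₀ = y from by abel] at h
  intro x
  have h1 := hone x
  rw [Finset.card_eq_one] at h1
  obtain ⟨v₀, hv₀⟩ := h1
  have hv₀mem : v₀ ∈ V ∧ x - (p : ℕ) • v₀ ∈ L := by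
    have hmm : v₀ ∈ V.filter fun v => x - (p : ℕ) • v ∈ L := by
      rw [hv₀]; exact Finset.mem_singleton_self v₀
    simpa [Finset.mem_filter] using hmm
  refine ⟨((p : ℕ) • v₀, x - (p : ℕ) • v₀),
    ⟨?_, hv₀mem.2, (add_sub_cancel ((p : ℕ) • v₀) x).symm⟩, ?_⟩
  · exact Finset.mem_coe.mpr (Finset.mem_image.mpr ⟨v₀, hv₀mem.1, rfl⟩)
  · rintro ⟨y₁, y₂⟩ ⟨hy₁, hy₂, hxy⟩
    obtain ⟨v₁, hv₁, rfl⟩ := Finset.mem_image.mp (Finset.mem_coe.mp hy₁)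
    have hy₂' : y₂ = x - (p : ℕ) • v₁ := by rw [hxy, add_sub_cancel_left]
    have hv₁f : v₁ ∈ V.filter fun v => x - (p : ℕ) • v ∈ L :=
      Finset.mem_filter.mpr ⟨hv₁, hy₂' ▸ hy₂⟩
    have hv₁0 : v₁ = v₀ := by rw [hv₀] at hv₁f; exact Finset.mem_singleton.mp hv₁f
    subst hv₁0
    rw [hy₂']

lemma aux : ∀ (k : ℕ) (a : ℤ), a.natAbs = k →
    ∀ (V : Finset (Fin n → ℤ)) (L : Set (Fin n → ℤ)),
      IsTiling (V : Set (Fin n → ℤ)) L → Int.gcd a (V.card : ℤ) = 1 →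
      ∀ l ∈ L, ∀ v ∈ V, ∀ w ∈ V, v ≠ w → l + a • (v - w) ∈ L → False := by
  intro k
  induction k using Nat.strong_induction_on with
  | _ k IH =>
    intro a hk V L hL hgcd l hl v hv w hw hvw hbad
    rcases Nat.lt_or_ge k 2 with hk2 | hk2
    · interval_cases k
      · -- a = 0 : then gcd = |V| = 1, but V has two distinct elements
        have ha0 : a = 0 := Int.natAbs_eq_zero.mp hk
        subst ha0
        rw [Int.gcd_zero_left, Int.natAbs_natCast] at hgcd
        have hlt : 1 < V.card := Finset.one_lt_card.mpr ⟨v, hv, w, hw, hvw⟩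
        omega
      · -- |a| = 1
        rcases Int.natAbs_eq_iff.mp hk with ha | ha
        · -- a = 1
          have ha1 : a = 1 := by exact_mod_cast ha
          rw [ha1] at hbad
          rw [one_smul] at hbad
          obtain ⟨P, -, hP⟩ := hL (v + l)
          have h1 := hP (v, l) ⟨hv, hl, rfl⟩
          have h2 := hP (w, l + (v - w)) ⟨hw, hbad, (by abel : v + l = w + (l + (v - w)))⟩
          exact hvw (congrArg Prod.fst (h1.trans h2.symm))
        · -- a = -1
          have ha1 : a = -1 := by exact_mod_cast ha
          rw [ha1] at hbad
          have e : l + (-1 : ℤ) • (v - w) = l + (w - v) := by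
            rw [neg_smul, one_smul]; abel
          rw [e] at hbad
          obtain ⟨P, -, hP⟩ := hL (w + l)
          have h1 := hP (w, l) ⟨hw, hl, rfl⟩
          have h2 := hP (v, l + (w - v)) ⟨hv, hbad, (by abel : w + l = v + (l + (w - v)))⟩
          exact hvw (congrArg Prod.fst (h2.trans h1.symm))
    · -- k ≥ 2 : peel off a prime factor
      set P := k.minFac with hPdef
      have hPprime : P.Prime := Nat.minFac_prime (by omega)
      have hPdvd : P ∣ k := Nat.minFac_dvd k
      have hPa : (P : ℤ) ∣ a := by
        rw [← Int.natAbs_dvd_natAbs, Int.natAbs_natCast, hk]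
        exact hPdvd
      obtain ⟨b, hb⟩ := hPa
      have hba : b ∣ a := ⟨(P : ℤ), by rw [hb]; ring⟩
      have hPV : ¬ P ∣ V.card := by
        intro hdvd
        have h2 : (P : ℤ) ∣ (V.card : ℤ) := Int.natCast_dvd_natCast.mpr hdvd
        have h3 := Int.dvd_gcd (⟨b, hb⟩ : (P : ℤ) ∣ a) h2
        rw [hgcd] at h3
        have h4 : P ∣ 1 := by exact_mod_cast h3
        have := Nat.dvd_one.mp h4
        exact hPprime.one_lt.ne' this
      have hT' := dilation hL hPprime hPV
      have hinj : Function.Injective (fun z : Fin n → ℤ => (P : ℕ) • z) := by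
        intro x y hxy
        have hP0 : (P : ℤ) ≠ 0 := by exact_mod_cast hPprime.ne_zero
        funext i
        have hxyi := congrFun hxy i
        simp only [Pi.smul_apply, nsmul_eq_mul] at hxyi
        exact mul_left_cancel₀ (by exact_mod_cast hPprime.ne_zero) hxyi
      have hcard' : (V.image fun z : Fin n → ℤ => (P : ℕ) • z).card = V.card :=
        Finset.card_image_of_injective V hinj
      have hgcd' : Int.gcd b (((V.image fun z : Fin n → ℤ => (P : ℕ) • z).card : ℕ) : ℤ) = 1 := by
        rw [hcard']
        have hdg : ((Int.gcd b (V.card : ℤ) : ℕ) : ℤ) ∣ ((Int.gcd a (V.card : ℤ) : ℕ) : ℤ) := by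
          apply Int.dvd_coe_gcd
          · exact (Int.gcd_dvd_left _ _).trans hba
          · exact Int.gcd_dvd_right _ _
        rw [hgcd] at hdg
        have : Int.gcd b (V.card : ℤ) ∣ 1 := by exact_mod_cast hdg
        exact Nat.dvd_one.mp this
      have hbadmul : b * (P : ℤ) = a := by rw [hb]; ring
      have hbad' : l + b • ((P : ℕ) • v - (P : ℕ) • w) ∈ L := by
        have e : l + b • ((P : ℕ) • v - (P : ℕ) • w) = l + a • (v - w) := by
          rw [← natCast_zsmul, ← natCast_zsmul, ← smul_sub, smul_smul, hbadmul]
        rw [e]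
        exact hbad
      have hne' : (P : ℕ) • v ≠ (P : ℕ) • w := fun hcon => hvw (hinj hcon)
      have hbk : b.natAbs < k := by
        have h1 : k = P * b.natAbs := by
          rw [← hk, hb, Int.natAbs_mul, Int.natAbs_natCast]
        have h2 : b.natAbs ≠ 0 := by
          intro h0; rw [h0, mul_zero] at h1; omega
        have h3 : 2 ≤ P := hPprime.two_le
        calc b.natAbs < 2 * b.natAbs := by omega
          _ ≤ P * b.natAbs := Nat.mul_le_mul_right _ h3
          _ = k := h1.symm
      exact IH b.natAbs hbk b rfl _ L hT' hgcd' l hl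
        _ (Finset.mem_image_of_mem _ hv) _ (Finset.mem_image_of_mem _ hw) hne' hbad'

end CoprimeShift

/-- If `L` tiles `ℤ^n` by translates of `V` and `gcd(a, |V|) = 1`, then for every `l ∈ L`
and distinct `v, w ∈ V`, the point `l + a·(v − w)` is not in `L`. -/
theorem not_mem_of_coprime_shift {n : ℕ} (V : Finset (Fin n → ℤ)) (L : Set (Fin n → ℤ))
    (hL : IsTiling (V : Set (Fin n → ℤ)) L) (a : ℤ) (ha : Int.gcd a (V.card : ℤ) = 1) :
    ∀ l ∈ L, ∀ v ∈ V, ∀ w ∈ V, v ≠ w → l + a • (v - w) ∉ L := by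
  intro l hl v hv w hw hvw hbad
  exact CoprimeShift.aux a.natAbs a rfl V L hL ha l hl v hv w hw hvw hbad
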